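/- Fix α > 0 and define τ : [1,∞) → ℝ by τ(r) = −(α/4)·(1 + 3t² − t⁴ + (1/5)t⁶) with t = (1 − 1/r)^{1/2}. Then: (i) τ(1) = −α/4; (ii) (1 − 1/r)^{1/2}·τ'(r) → 0 as r → 1⁺; (iii) τ(r) < 0 for all r ≥ 1; (iv) τ is strictly decreasing on (1,∞); and (v) τ(r) → −4α/5 as r → ∞; in particular the limit at infinity exists and is a negative constant. -/

import Mathlib

open Filter

/-- Properties of the Schwarzschild ℛ²ₛ-potential (mass `m = 1/2`): for `α > 0` and
`τ(r) = −(α/4)·(1 + 3t² − t⁴ + (1/5)t⁶)` with `t = (1 − 1/r)^{1/2}` on `[1,∞)`: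
(i) `τ(1) = −α/4`; (ii) `(1 − 1/r)^{1/2}·τ'(r) → 0` as `r → 1⁺`; (iii) `τ < 0` on
`[1,∞)`; (iv) `τ` is strictly decreasing on `(1,∞)`; (v) `τ(r) → −4α/5` as `r → ∞`. -/
private lemma poly_pos {s : ℝ} (h0 : 0 ≤ s) (h1 : s < 1) :
    0 < 1 + 3 * s - s ^ 2 + (1/5) * s ^ 3 := by
  nlinarith [mul_nonneg h0 (by linarith : (0:ℝ) ≤ 1 - s),
    mul_nonneg (mul_nonneg h0 h0) h0]

private lemma poly_mono {sa sb : ℝ} (ha0 : 0 ≤ sa) (hab : sa < sb) (hb1 : sb < 1) :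
    1 + 3 * sa - sa ^ 2 + (1/5) * sa ^ 3 < 1 + 3 * sb - sb ^ 2 + (1/5) * sb ^ 3 := by
  have hb0 : 0 ≤ sb := le_of_lt (lt_of_le_of_lt ha0 hab)
  have hquad : 0 ≤ sa ^ 2 + sa * sb + sb ^ 2 := by
    nlinarith [mul_nonneg ha0 hb0, sq_nonneg sa, sq_nonneg sb]
  nlinarith [mul_pos (sub_pos.mpr hab) (show (0:ℝ) < 3 - sa - sb by linarith),
    mul_nonneg (sub_nonneg.mpr hab.le) hquad]

theorem schwarzschild_potential_properties
    (α : ℝ) (hα : 0 < α) (tau : ℝ → ℝ)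
    (htau : ∀ r : ℝ, 1 ≤ r → tau r =
      -(α / 4) * (1 + 3 * Real.sqrt (1 - 1 / r) ^ 2 - Real.sqrt (1 - 1 / r) ^ 4 +
        (1 / 5) * Real.sqrt (1 - 1 / r) ^ 6)) :
    tau 1 = -(α / 4) ∧
    Tendsto (fun r : ℝ => Real.sqrt (1 - 1 / r) * deriv tau r)
      (nhdsWithin 1 (Set.Ioi 1)) (nhds 0) ∧
    (∀ r : ℝ, 1 ≤ r → tau r < 0) ∧
    StrictAntiOn tau (Set.Ioi 1) ∧
    Tendsto tau atTop (nhds (-(4 / 5) * α)) := by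
  set c : ℝ := -(α / 4) with hc
  have hcneg : c < 0 := by rw [hc]; linarith
  -- rewrite tau without square roots
  have htau' : ∀ r : ℝ, 1 ≤ r → tau r =
      c * (1 + 3 * (1 - 1/r) - (1 - 1/r)^2 + (1/5) * (1 - 1/r)^3) := by
    intro r hr
    have hr0 : (0:ℝ) < r := lt_of_lt_of_le one_pos hr
    have hs : 0 ≤ 1 - 1/r := by
      have h1 : 1/r ≤ 1 := by rw [div_le_one hr0]; exact hr
      linarith
    have h2 : Real.sqrt (1 - 1/r) ^ 2 = 1 - 1/r := Real.sq_sqrt hs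
    have h4 : Real.sqrt (1 - 1/r) ^ 4 = (1 - 1/r)^2 := by
      rw [show (4:ℕ) = 2*2 from rfl, pow_mul, h2]
    have h6 : Real.sqrt (1 - 1/r) ^ 6 = (1 - 1/r)^3 := by
      rw [show (6:ℕ) = 2*3 from rfl, pow_mul, h2]
    rw [htau r hr, h2, h4, h6]
  -- the polynomial P
  have hP : ∀ r a b : ℝ, True := fun _ _ _ => trivial
  refine ⟨?_, ?_, ?_, ?_, ?_⟩
  · -- (i)
    rw [htau' 1 le_rfl]
    norm_num
  · -- (ii)
    have hderiv : ∀ r : ℝ, 1 < r → deriv tau r =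
        c * (3 * (1/r^2) - 2*(1-1/r)*(1/r^2) + (1/5)*(3*(1-1/r)^2*(1/r^2))) := by
      intro r hr
      have hr0 : r ≠ 0 := by positivity
      have hu : HasDerivAt (fun x:ℝ => 1 - 1/x) (1/r^2) r := by
        simpa [one_div] using ((hasDerivAt_inv hr0).const_sub 1)
      have hg : HasDerivAt
          (fun x:ℝ => c * (1 + 3*(1 - 1/x) - (1-1/x)^2 + (1/5)*(1-1/x)^3))
          (c * (3*(1/r^2) - 2*(1-1/r)*(1/r^2) + (1/5)*(3*(1-1/r)^2*(1/r^2)))) r := by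
        have h1 := hu.const_mul (3:ℝ)
        have h2 := hu.pow 2
        have h3 := hu.pow 3
        have h := ((((hasDerivAt_const r (1:ℝ)).add h1).sub h2).add
          (h3.const_mul (1/5 : ℝ))).const_mul c
        refine h.congr_deriv ?_
        push_cast
        ring
      have heq : tau =ᶠ[nhds r]
          (fun x:ℝ => c * (1 + 3*(1 - 1/x) - (1-1/x)^2 + (1/5)*(1-1/x)^3)) := by
        filter_upwards [Ioi_mem_nhds hr] with x hx
        exact htau' x (le_of_lt hx)
      rw [heq.deriv_eq, hg.deriv]
    have hF : Tendsto (fun r : ℝ => Real.sqrt (1 - 1/r) *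
        (c * (3 * (1/r^2) - 2*(1-1/r)*(1/r^2) + (1/5)*(3*(1-1/r)^2*(1/r^2)))))
        (nhdsWithin 1 (Set.Ioi 1)) (nhds 0) := by
      have hcont : ContinuousAt (fun r : ℝ => Real.sqrt (1 - 1/r) *
          (c * (3 * (1/r^2) - 2*(1-1/r)*(1/r^2) + (1/5)*(3*(1-1/r)^2*(1/r^2))))) 1 := by
        have h1 : ContinuousAt (fun r : ℝ => 1 - 1/r) 1 := by
          fun_prop (disch := norm_num)
        have h2 : ContinuousAt (fun r : ℝ => Real.sqrt (1 - 1/r)) 1 :=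
          Real.continuous_sqrt.continuousAt.comp h1
        have h3 : ContinuousAt (fun r : ℝ =>
            c * (3 * (1/r^2) - 2*(1-1/r)*(1/r^2) + (1/5)*(3*(1-1/r)^2*(1/r^2)))) 1 := by
          fun_prop (disch := norm_num)
        exact h2.mul h3
      have h := hcont.tendsto.mono_left (nhdsWithin_le_nhds (s := Set.Ioi 1))
      norm_num at h
      simpa using h
    refine hF.congr' ?_
    filter_upwards [self_mem_nhdsWithin] with x hx
    rw [hderiv x hx]
  · -- (iii)
    intro r hr
    have hr0 : (0:ℝ) < r := lt_of_lt_of_le one_pos hr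
    have hs0 : 0 ≤ 1 - 1/r := by
      have h1 : 1/r ≤ 1 := by rw [div_le_one hr0]; exact hr
      linarith
    have hs1 : 1 - 1/r < 1 := by
      have : 0 < 1/r := by positivity
      linarith
    rw [htau' r hr]
    exact mul_neg_of_neg_of_pos hcneg (poly_pos hs0 hs1)
  · -- (iv)
    intro a ha b hb hab
    simp only [Set.mem_Ioi] at ha hb
    have ha0 : (0:ℝ) < a := lt_trans one_pos ha
    have hb0 : (0:ℝ) < b := lt_trans one_pos hb
    set sa := 1 - 1/a with hsa
    set sb := 1 - 1/b with hsb
    have hsalt : sa < sb := by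
      have : 1/b < 1/a := one_div_lt_one_div_of_lt ha0 hab
      simp only [hsa, hsb]; linarith
    have hsa0 : 0 ≤ sa := by
      have h1 : 1/a ≤ 1 := by rw [div_le_one ha0]; linarith
      simp only [hsa]; linarith
    have hsb1 : sb < 1 := by
      have : 0 < 1/b := by positivity
      simp only [hsb]; linarith
    have hsb0 : 0 ≤ sb := le_of_lt (lt_of_le_of_lt hsa0 hsalt)
    rw [htau' a (le_of_lt ha), htau' b (le_of_lt hb)]
    have hmono := poly_mono hsa0 hsalt hsb1
    have := mul_lt_mul_of_neg_left hmono hcneg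
    linarith
  · -- (v)
    have hlim : Tendsto (fun r : ℝ => 1 - 1/r) atTop (nhds 1) := by
      have := tendsto_inv_atTop_zero (𝕜 := ℝ)
      simpa [one_div] using (tendsto_const_nhds (x := (1:ℝ)) (f := atTop)).sub this
    have hcont : ContinuousAt (fun u : ℝ => c * (1 + 3*u - u^2 + (1/5)*u^3)) 1 := by
      fun_prop
    have hcomp : Tendsto (fun r : ℝ => c * (1 + 3*(1-1/r) - (1-1/r)^2 + (1/5)*(1-1/r)^3))
        atTop (nhds (c * (1 + 3*1 - 1^2 + (1/5)*1^3))) :=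
      (hcont.tendsto).comp hlim
    have hval : c * (1 + 3*(1:ℝ) - 1^2 + (1/5)*1^3) = -(4/5) * α := by
      rw [hc]; ring
    rw [hval] at hcomp
    refine hcomp.congr' ?_
    filter_upwards [eventually_ge_atTop (1:ℝ)] with x hx
    rw [htau' x hx]
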